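/- The subspace of ℂ⁴⊗ℂ⁴ spanned by the four vectors |00⟩, |01⟩+|10⟩, |02⟩+|20⟩, |03⟩+|12⟩+|21⟩+|30⟩ is contained in the span of the seven product vectors |0⟩⊗|0⟩, |0⟩⊗|3⟩, |3⟩⊗|0⟩, Ψ₁⊗Ψ₁, Ψ₂⊗Ψ₂, Ψ₃⊗Ψ₃, Ψ₄⊗Ψ₄, where Ψ₁ = |0⟩+|1⟩+|2⟩, Ψ₂ = |0⟩+|1⟩−|2⟩, Ψ₃ = |1⟩+|2⟩, Ψ₄ = |1⟩−|2⟩. -/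
import Mathlib


open TensorProduct

/-- ℂ⁴ with standard basis `e 0, e 1, e 2, e 3`. -/
abbrev Q4 : Type := Fin 4 → ℂ

noncomputable def e (i : Fin 4) : Q4 := Pi.single i 1

/-- `|ij⟩ = |i⟩ ⊗ |j⟩ ∈ ℂ⁴ ⊗ ℂ⁴`. -/
noncomputable def ee (i j : Fin 4) : Q4 ⊗[ℂ] Q4 := e i ⊗ₜ[ℂ] e j

noncomputable def Ψ₁ : Q4 := e 0 + e 1 + e 2
noncomputable def Ψ₂ : Q4 := e 0 + e 1 - e 2
noncomputable def Ψ₃ : Q4 := e 1 + e 2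
noncomputable def Ψ₄ : Q4 := e 1 - e 2

theorem span_contained_in_seven_products :
    Submodule.span ℂ ({ee 0 0, ee 0 1 + ee 1 0, ee 0 2 + ee 2 0,
        ee 0 3 + ee 1 2 + ee 2 1 + ee 3 0} : Set (Q4 ⊗[ℂ] Q4)) ≤
    Submodule.span ℂ ({ee 0 0, ee 0 3, ee 3 0, Ψ₁ ⊗ₜ[ℂ] Ψ₁, Ψ₂ ⊗ₜ[ℂ] Ψ₂,
        Ψ₃ ⊗ₜ[ℂ] Ψ₃, Ψ₄ ⊗ₜ[ℂ] Ψ₄} : Set (Q4 ⊗[ℂ] Q4)) := by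
  set S := ({ee 0 0, ee 0 3, ee 3 0, Ψ₁ ⊗ₜ[ℂ] Ψ₁, Ψ₂ ⊗ₜ[ℂ] Ψ₂,
        Ψ₃ ⊗ₜ[ℂ] Ψ₃, Ψ₄ ⊗ₜ[ℂ] Ψ₄} : Set (Q4 ⊗[ℂ] Q4)) with hS
  have h1 : ee 0 0 ∈ Submodule.span ℂ S := Submodule.subset_span (by simp [hS])
  have h2 : ee 0 3 ∈ Submodule.span ℂ S := Submodule.subset_span (by simp [hS])
  have h3 : ee 3 0 ∈ Submodule.span ℂ S := Submodule.subset_span (by simp [hS])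
  have h4 : Ψ₁ ⊗ₜ[ℂ] Ψ₁ ∈ Submodule.span ℂ S := Submodule.subset_span (by simp [hS])
  have h5 : Ψ₂ ⊗ₜ[ℂ] Ψ₂ ∈ Submodule.span ℂ S := Submodule.subset_span (by simp [hS])
  have h6 : Ψ₃ ⊗ₜ[ℂ] Ψ₃ ∈ Submodule.span ℂ S := Submodule.subset_span (by simp [hS])
  have h7 : Ψ₄ ⊗ₜ[ℂ] Ψ₄ ∈ Submodule.span ℂ S := Submodule.subset_span (by simp [hS])
  have key2 : ee 0 1 + ee 1 0 = (1/2 : ℂ) • (Ψ₁ ⊗ₜ[ℂ] Ψ₁) + (1/2 : ℂ) • (Ψ₂ ⊗ₜ[ℂ] Ψ₂)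
      - (1/2 : ℂ) • (Ψ₃ ⊗ₜ[ℂ] Ψ₃) - (1/2 : ℂ) • (Ψ₄ ⊗ₜ[ℂ] Ψ₄) - ee 0 0 := by
    simp only [Ψ₁, Ψ₂, Ψ₃, Ψ₄, ee, tmul_add, add_tmul, tmul_sub, sub_tmul]
    module
  have key3 : ee 0 2 + ee 2 0 = (1/2 : ℂ) • (Ψ₁ ⊗ₜ[ℂ] Ψ₁) - (1/2 : ℂ) • (Ψ₂ ⊗ₜ[ℂ] Ψ₂)
      - (1/2 : ℂ) • (Ψ₃ ⊗ₜ[ℂ] Ψ₃) + (1/2 : ℂ) • (Ψ₄ ⊗ₜ[ℂ] Ψ₄) := by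
    simp only [Ψ₁, Ψ₂, Ψ₃, Ψ₄, ee, tmul_add, add_tmul, tmul_sub, sub_tmul]
    module
  have key4 : ee 0 3 + ee 1 2 + ee 2 1 + ee 3 0 = ee 0 3 + ee 3 0
      + (1/2 : ℂ) • (Ψ₃ ⊗ₜ[ℂ] Ψ₃) - (1/2 : ℂ) • (Ψ₄ ⊗ₜ[ℂ] Ψ₄) := by
    simp only [Ψ₁, Ψ₂, Ψ₃, Ψ₄, ee, tmul_add, add_tmul, tmul_sub, sub_tmul]
    module
  apply Submodule.span_le.mpr
  rintro x hx
  simp only [Set.mem_insert_iff, Set.mem_singleton_iff] at hx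
  rcases hx with rfl | rfl | rfl | rfl
  · exact h1
  · rw [key2]
    exact Submodule.sub_mem _ (Submodule.sub_mem _ (Submodule.sub_mem _
      (Submodule.add_mem _ (Submodule.smul_mem _ _ h4) (Submodule.smul_mem _ _ h5))
      (Submodule.smul_mem _ _ h6)) (Submodule.smul_mem _ _ h7)) h1
  · rw [key3]
    exact Submodule.add_mem _ (Submodule.sub_mem _ (Submodule.sub_mem _
      (Submodule.smul_mem _ _ h4) (Submodule.smul_mem _ _ h5))
      (Submodule.smul_mem _ _ h6)) (Submodule.smul_mem _ _ h7)
  · rw [key4]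
    exact Submodule.sub_mem _ (Submodule.add_mem _ (Submodule.add_mem _ h2 h3)
      (Submodule.smul_mem _ _ h6)) (Submodule.smul_mem _ _ h7)
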